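/- Let D be an ultrafilter on a set I and let X be a GO space. Then X is D-compact if and only if, for every infinite regular cardinal ν such that D is ν-decomposable, every strictly increasing ν-indexed sequence of elements of X has a supremum to which it converges, and every strictly decreasing ν-indexed sequence of elements of X has an infimum to which it converges. -/

import Mathlib

universe u v

open Set Cardinal Filter Topology TopologicalSpace

section Defs

variable {X : Type u} [LinearOrder X]

/-- A subset `Y` of a linear order `X`, having no maximum, is `lam`-full in `X` on the right
if for every `y ∈ Y` the set `⋃ y' ∈ Y, (y, y')` (intervals computed in `X`)
has cardinality at least `lam`. -/
def FullRight (lam : Cardinal.{u}) (Y : Set X) : Prop :=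
  (¬ ∃ m ∈ Y, ∀ y ∈ Y, y ≤ m) ∧
    ∀ y ∈ Y, lam ≤ #(⋃ y' ∈ Y, Ioo y y')

/-- A subset `Y` of a linear order `X`, having no minimum, is `lam`-full in `X` on the left
if for every `y ∈ Y` the set `⋃ y' ∈ Y, (y', y)` (intervals computed in `X`)
has cardinality at least `lam`. -/
def FullLeft (lam : Cardinal.{u}) (Y : Set X) : Prop :=
  (¬ ∃ m ∈ Y, ∀ y ∈ Y, m ≤ y) ∧
    ∀ y ∈ Y, lam ≤ #(⋃ y' ∈ Y, Ioo y' y)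

/-- The pair `(A, B)` is a gap of the space `X`: `A`, `B` are open, `A ∪ B = X`,
every element of `A` is less than every element of `B`, `A` has no maximum and `B` has
no minimum (`A` or `B` may be empty). -/
def IsGap [TopologicalSpace X] (A B : Set X) : Prop :=
  IsOpen A ∧ IsOpen B ∧ A ∪ B = Set.univ ∧ (∀ a ∈ A, ∀ b ∈ B, a < b) ∧
    (¬ ∃ m ∈ A, ∀ a ∈ A, a ≤ m) ∧ (¬ ∃ m ∈ B, ∀ b ∈ B, m ≤ b)

/-- The pair `(A, B)` is a pseudo-gap of the space `X`: `A`, `B` are open and nonempty,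
`A ∪ B = X`, every element of `A` is less than every element of `B`, and either `A` has a
maximum and `B` has no minimum, or `A` has no maximum and `B` has a minimum. -/
def IsPseudoGap [TopologicalSpace X] (A B : Set X) : Prop :=
  IsOpen A ∧ IsOpen B ∧ A ∪ B = Set.univ ∧ (∀ a ∈ A, ∀ b ∈ B, a < b) ∧
    A.Nonempty ∧ B.Nonempty ∧
    (((∃ m ∈ A, ∀ a ∈ A, a ≤ m) ∧ ¬ ∃ m ∈ B, ∀ b ∈ B, m ≤ b) ∨
      ((¬ ∃ m ∈ A, ∀ a ∈ A, a ≤ m) ∧ ∃ m ∈ B, ∀ b ∈ B, m ≤ b))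

/-- The cofinality of `A`: the least cardinality of a subset of `A` cofinal in `A`. -/
noncomputable def cofinCard (A : Set X) : Cardinal.{u} :=
  sInf {c | ∃ S : Set X, S ⊆ A ∧ (∀ a ∈ A, ∃ s ∈ S, a ≤ s) ∧ c = #S}

/-- The coinitiality of `B`: the least cardinality of a subset of `B` coinitial in `B`. -/
noncomputable def coinitCard (B : Set X) : Cardinal.{u} :=
  sInf {c | ∃ S : Set X, S ⊆ B ∧ (∀ b ∈ B, ∃ s ∈ S, s ≤ b) ∧ c = #S}

/-- `mu` is a type of the gap `(A, B)`: `mu` is the cofinality of `A` or the coinitiality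
of `B`. -/
def IsGapType (mu : Cardinal.{u}) (A B : Set X) : Prop :=
  mu = cofinCard A ∨ mu = coinitCard B

/-- `mu` is the type of the pseudo-gap `(A, B)`: the cofinality of `A` if `B` has a minimum,
the coinitiality of `B` if `A` has a maximum. -/
def IsPseudoGapType (mu : Cardinal.{u}) (A B : Set X) : Prop :=
  ((∃ m ∈ B, ∀ b ∈ B, m ≤ b) ∧ mu = cofinCard A) ∨
    ((∃ m ∈ A, ∀ a ∈ A, a ≤ m) ∧ mu = coinitCard B)

end Defs

/-- A topological space is `[ν, ν]`-compact if every open cover of cardinality at most `ν`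
has a subcover of cardinality less than `ν`. -/
def NuNuCompact (X : Type u) [TopologicalSpace X] (ν : Cardinal.{u}) : Prop :=
  ∀ 𝒰 : Set (Set X), (∀ U ∈ 𝒰, IsOpen U) → ⋃₀ 𝒰 = Set.univ → #𝒰 ≤ ν →
    ∃ 𝒱 ⊆ 𝒰, #𝒱 < ν ∧ ⋃₀ 𝒱 = Set.univ

/-- A topological space is weakly `[ν, ν]`-compact if every open cover of cardinality at
most `ν` has a subfamily of cardinality less than `ν` whose union is dense. -/
def WeakNuNuCompact (X : Type u) [TopologicalSpace X] (ν : Cardinal.{u}) : Prop :=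
  ∀ 𝒰 : Set (Set X), (∀ U ∈ 𝒰, IsOpen U) → ⋃₀ 𝒰 = Set.univ → #𝒰 ≤ ν →
    ∃ 𝒱 ⊆ 𝒰, #𝒱 < ν ∧ Dense (⋃₀ 𝒱)

/-- A topological space is initially `lam`-compact if every open cover of cardinality at
most `lam` has a finite subcover. -/
def InitiallyCompact (X : Type u) [TopologicalSpace X] (lam : Cardinal.{u}) : Prop :=
  ∀ 𝒰 : Set (Set X), (∀ U ∈ 𝒰, IsOpen U) → ⋃₀ 𝒰 = Set.univ → #𝒰 ≤ lam →
    ∃ 𝒱 ⊆ 𝒰, 𝒱.Finite ∧ ⋃₀ 𝒱 = Set.univ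

/-- A topological space is weakly initially `lam`-compact if every open cover of cardinality
at most `lam` has a finite subfamily whose union is dense. -/
def WeakInitiallyCompact (X : Type u) [TopologicalSpace X] (lam : Cardinal.{u}) : Prop :=
  ∀ 𝒰 : Set (Set X), (∀ U ∈ 𝒰, IsOpen U) → ⋃₀ 𝒰 = Set.univ → #𝒰 ≤ lam →
    ∃ 𝒱 ⊆ 𝒰, 𝒱.Finite ∧ Dense (⋃₀ 𝒱)

/-- The sequence `x` `D`-converges to `p`: for every open neighbourhood `U` of `p`,
`{i | x i ∈ U} ∈ D`. -/
def DConv {I : Type v} {X : Type u} [TopologicalSpace X] (D : Ultrafilter I)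
    (x : I → X) (p : X) : Prop :=
  ∀ U : Set X, IsOpen U → p ∈ U → {i | x i ∈ U} ∈ D

/-- `X` is `D`-compact: every `I`-indexed sequence of elements of `X` `D`-converges to some
point of `X`. -/
def DCompact {I : Type v} (D : Ultrafilter I) (X : Type u) [TopologicalSpace X] : Prop :=
  ∀ x : I → X, ∃ p : X, DConv D x p

/-- `p` is a `D`-limit point of the sequence of sets `Y`: for every neighbourhood `U`
of `p`, `{i | U ∩ Y i ≠ ∅} ∈ D`. -/
def DLimitPt {I : Type v} {X : Type u} [TopologicalSpace X] (D : Ultrafilter I)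
    (Y : I → Set X) (p : X) : Prop :=
  ∀ U ∈ nhds p, {i | (U ∩ Y i).Nonempty} ∈ D

/-- `X` is `D`-pseudocompact: every `I`-indexed sequence of nonempty open sets of `X` has a
`D`-limit point. -/
def DPseudocompact {I : Type v} (D : Ultrafilter I) (X : Type u) [TopologicalSpace X] : Prop :=
  ∀ O : I → Set X, (∀ i, IsOpen (O i)) → (∀ i, (O i).Nonempty) → ∃ p : X, DLimitPt D O p

/-- The ultrafilter `D` is `ν`-decomposable: there is `f : I → ν` such that the preimage of
every subset of `ν` of cardinality less than `ν` is not in `D`. -/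
def Decomposable {I : Type v} (D : Ultrafilter I) (ν : Cardinal.{u}) : Prop :=
  ∃ f : I → ν.ord.ToType, ∀ S : Set ν.ord.ToType, #S < ν → f ⁻¹' S ∉ D

section GOLemmas

variable {X : Type u} [LinearOrder X] [TopologicalSpace X] [T2Space X]

lemma go_isOpen_Ioi
    (hGO : ∃ 𝓑 : Set (Set X), IsTopologicalBasis 𝓑 ∧ ∀ s ∈ 𝓑, s.OrdConnected)
    (a : X) : IsOpen (Ioi a) := by
  obtain ⟨𝓑, hB, hconv⟩ := hGO
  rw [isOpen_iff_forall_mem_open]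
  intro p (hp : a < p)
  obtain ⟨U, V, hU, hV, hpU, haV, hUV⟩ := t2_separation hp.ne'
  obtain ⟨W, hWB, hpW, hWU⟩ := hB.exists_subset_of_mem_open hpU hU
  refine ⟨W, ?_, hB.isOpen hWB, hpW⟩
  intro y hyW
  by_contra hya
  rw [Set.mem_Ioi, not_lt] at hya
  have : a ∈ W := (hconv W hWB).out hyW hpW ⟨hya, hp.le⟩
  exact (Set.disjoint_left.mp hUV (hWU this)) haV

lemma go_isOpen_Iio
    (hGO : ∃ 𝓑 : Set (Set X), IsTopologicalBasis 𝓑 ∧ ∀ s ∈ 𝓑, s.OrdConnected)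
    (a : X) : IsOpen (Iio a) := by
  obtain ⟨𝓑, hB, hconv⟩ := hGO
  rw [isOpen_iff_forall_mem_open]
  intro p (hp : p < a)
  obtain ⟨U, V, hU, hV, hpU, haV, hUV⟩ := t2_separation hp.ne
  obtain ⟨W, hWB, hpW, hWU⟩ := hB.exists_subset_of_mem_open hpU hU
  refine ⟨W, ?_, hB.isOpen hWB, hpW⟩
  intro y hyW
  by_contra hya
  rw [Set.mem_Iio, not_lt] at hya
  have : a ∈ W := (hconv W hWB).out hpW hyW ⟨hp.le, hya⟩
  exact (Set.disjoint_left.mp hUV (hWU this)) haV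

end GOLemmas

-- cardinal facts
lemma mk_Iic_lt {ν : Cardinal.{u}} (hν : ℵ₀ ≤ ν) (γ : ν.ord.ToType) : #(Iic γ) < ν := by
  have h1 : #(Iio γ) < ν := Cardinal.mk_Iio_ord_toType γ
  have : (Iic γ : Set ν.ord.ToType) = insert γ (Iio γ) := by
    ext y; simp [le_iff_lt_or_eq, or_comm]
  rw [this]
  calc #(insert γ (Iio γ) : Set ν.ord.ToType) ≤ #(Iio γ) + 1 := Cardinal.mk_insert_le
  _ < ν := Cardinal.add_lt_of_lt hν h1 (lt_of_lt_of_le Cardinal.one_lt_aleph0 hν)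

lemma bddAbove_of_small {ν : Cardinal.{u}} (hreg : ν.IsRegular)
    {S : Set ν.ord.ToType} (hS : #S < ν) : BddAbove S := by
  by_contra hbd
  have hunb : Set.Unbounded (· < ·) S := by
    intro a
    obtain ⟨b, hbS, hab⟩ := not_bddAbove_iff.mp hbd a
    exact ⟨b, hbS, not_lt.mpr hab.le⟩
  haveI : IsWellOrder ν.ord.ToType (· < ·) := isWellOrder_lt
  have := Order.cof_le (show IsCofinal S from fun a =>
    let ⟨b, hb, hab⟩ := hunb a; ⟨b, hb, not_lt.mp hab⟩)
  rw [Ordinal.cof_toType] at this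
  rw [hreg.cof_eq] at this
  exact absurd hS (not_lt.mpr this)

lemma preimage_not_mem_of_bdd {I : Type v} (D : Ultrafilter I) {ν : Cardinal.{u}}
    (hν : ℵ₀ ≤ ν) {h : I → ν.ord.ToType}
    (hh : ∀ S : Set ν.ord.ToType, #S < ν → h ⁻¹' S ∉ D)
    {A : Set ν.ord.ToType} (hA : BddAbove A) : h ⁻¹' A ∉ D := by
  obtain ⟨γ₀, hγ₀⟩ := hA
  have : #A < ν := lt_of_le_of_lt (Cardinal.mk_le_mk_of_subset hγ₀) (mk_Iic_lt hν γ₀)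
  exact hh A this

lemma fwd_mono {I : Type v} (D : Ultrafilter I) {X : Type u} [LinearOrder X]
    [TopologicalSpace X] [T2Space X]
    (hGO : ∃ 𝓑 : Set (Set X), IsTopologicalBasis 𝓑 ∧ ∀ s ∈ 𝓑, s.OrdConnected)
    (hc : DCompact D X) {ν : Cardinal.{u}} (hν : ℵ₀ ≤ ν)
    (hdec : Decomposable D ν) (f : ν.ord.ToType → X) (hf : StrictMono f) :
    ∃ s : X, IsLUB (Set.range f) s ∧ Tendsto f atTop (𝓝 s) := by
  obtain ⟨𝓑, hB, hconv⟩ := hGO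
  obtain ⟨h, hh⟩ := hdec
  obtain ⟨p, hp⟩ := hc (f ∘ h)
  have hν0 : ν ≠ 0 := (Cardinal.aleph0_pos.trans_le hν).ne'
  haveI : Nonempty ν.ord.ToType := Ordinal.toType_nonempty_iff_ne_zero.mpr
    (by simpa using hν0)
  have key : ∀ A : Set ν.ord.ToType, BddAbove A → h ⁻¹' A ∉ D :=
    fun A hA => preimage_not_mem_of_bdd D hν hh hA
  -- p is an upper bound
  have hub : ∀ γ, f γ ≤ p := by
    intro γ
    by_contra hlt
    rw [not_le] at hlt
    have hD : {i | (f ∘ h) i ∈ Iio (f γ)} ∈ D :=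
      hp (Iio (f γ)) (go_isOpen_Iio ⟨𝓑, hB, hconv⟩ (f γ)) hlt
    have hsub : {i | (f ∘ h) i ∈ Iio (f γ)} ⊆ h ⁻¹' (Iio γ) := by
      intro i hi; exact hf.lt_iff_lt.mp hi
    exact key (Iio γ) (bddAbove_Iio) (Filter.mem_of_superset hD hsub)
  -- eventual membership in open sets
  have hev : ∀ U : Set X, IsOpen U → p ∈ U → ∀ᶠ γ in atTop, f γ ∈ U := by
    intro U hU hpU
    obtain ⟨V, hVB, hpV, hVU⟩ := hB.exists_subset_of_mem_open hpU hU
    have hD : {i | (f ∘ h) i ∈ V} ∈ D := hp V (hB.isOpen hVB) hpV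
    have hunb : ¬ BddAbove {γ | f γ ∈ V} := fun hbd => key _ hbd hD
    obtain ⟨γ₁, hγ₁⟩ : ∃ γ, f γ ∈ V := by
      obtain ⟨b, hb, -⟩ := not_bddAbove_iff.mp hunb (Classical.arbitrary _)
      exact ⟨b, hb⟩
    rw [eventually_atTop]
    refine ⟨γ₁, fun γ hγ => ?_⟩
    obtain ⟨γ₂, hγ₂, hγγ₂⟩ := not_bddAbove_iff.mp hunb γ
    exact hVU ((hconv V hVB).out hγ₁ hγ₂ ⟨hf.monotone hγ, hf.monotone hγγ₂.le⟩)
  refine ⟨p, ⟨?_, ?_⟩, ?_⟩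
  · rintro _ ⟨γ, rfl⟩; exact hub γ
  · intro b hb
    by_contra hbp
    rw [not_le] at hbp
    have hD : {i | (f ∘ h) i ∈ Ioi b} ∈ D :=
      hp (Ioi b) (go_isOpen_Ioi ⟨𝓑, hB, hconv⟩ b) hbp
    obtain ⟨i, hi⟩ := Ultrafilter.nonempty_of_mem hD
    exact absurd (hb (Set.mem_range_self (h i))) (not_le.mpr hi)
  · intro U hU
    rw [mem_nhds_iff] at hU
    obtain ⟨t, htU, ht, hpt⟩ := hU
    exact (hev t ht hpt).mono fun γ hγ => htU hγ

/-- property: `o` indexes a strictly increasing cofinal sequence in `S`. -/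
def CofSeq {X : Type u} [LinearOrder X] (S : Set X) (o : Ordinal.{u}) : Prop :=
  ∃ g : o.ToType → X, StrictMono g ∧ (∀ γ, g γ ∈ S) ∧ ∀ a ∈ S, ∃ γ, a ≤ g γ

lemma cofSeq_exists {X : Type u} [LinearOrder X] (S : Set X) :
    ∃ o, CofSeq S o := by
  classical
  let r : ↥S → ↥S → Prop := WellOrderingRel
  haveI : IsWellOrder ↥S r := WellOrderingRel.isWellOrder
  have wf : WellFounded r := IsWellFounded.wf
  let C : ↥S → Prop := wf.fix (fun c ih => ∀ c', (h : r c' c) → ih c' h → (c' : X) < c)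
  have hC : ∀ c, C c ↔ ∀ c', r c' c → C c' → (c' : X) < c := by
    intro c
    have := wf.fix_eq (fun c ih => ∀ c', (h : r c' c) → ih c' h → (c' : X) < c) c
    exact this ▸ Iff.rfl
  have hchain : ∀ c c', C c → C c' → r c c' → (c : X) < c' := fun c c' hc hc' hr =>
    (hC c').mp hc' c hr hc
  have hcof : ∀ a : ↥S, ∃ c : ↥S, C c ∧ (a : X) ≤ c := by
    intro a
    by_contra hcon
    push_neg at hcon
    have hCa : C a := by
      rw [hC]
      intro c' _ hc'
      exact hcon c' hc'
    exact absurd (hcon a hCa) (lt_irrefl _)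
  -- the chosen set, as a subtype of X
  let T : Set X := {y | ∃ h : y ∈ S, C ⟨y, h⟩}
  have hTS : T ⊆ S := fun y hy => hy.1
  let e : ↥T → ↥S := Set.inclusion hTS
  have hCe : ∀ t : ↥T, C (e t) := by
    rintro ⟨y, hy, hCy⟩
    exact hCy
  have hsub : ∀ t t' : ↥T, (t : X) < (t' : X) → r (e t) (e t') := by
    intro t t' hlt
    rcases trichotomous_of r (e t) (e t') with h | h | h
    · exact h
    · exact absurd (congrArg Subtype.val h) (by simpa using hlt.ne)
    · exact absurd (hchain _ _ (hCe t') (hCe t) h) (by exact hlt.asymm)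
  have ltwf : WellFounded ((· < ·) : ↥T → ↥T → Prop) :=
    Subrelation.wf (fun {t t'} h => hsub t t' h) (InvImage.wf e wf)
  haveI : WellFoundedLT ↥T := ⟨ltwf⟩
  haveI : IsWellOrder ↥T (· < ·) := isWellOrder_lt
  set o₁ : Ordinal.{u} := Ordinal.type ((· < ·) : ↥T → ↥T → Prop) with ho₁
  refine ⟨o₁, ?_⟩
  haveI : IsWellOrder o₁.ToType (· < ·) := isWellOrder_lt
  have htype : Ordinal.type ((· < ·) : o₁.ToType → o₁.ToType → Prop) = Ordinal.type ((· < ·) : ↥T → ↥T → Prop) := Ordinal.type_toType o₁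
  obtain ⟨iso⟩ := Ordinal.type_eq.mp htype
  refine ⟨fun γ => ((iso γ : ↥T) : X), ?_, ?_, ?_⟩
  · intro γ γ' h
    exact iso.map_rel_iff.mpr h
  · intro γ
    exact hTS (iso γ).2
  · intro a ha
    obtain ⟨c, hCc, hac⟩ := hcof ⟨a, ha⟩
    have hcT : (c : X) ∈ T := ⟨c.2, hCc⟩
    refine ⟨iso.symm ⟨(c : X), hcT⟩, hac.trans (le_of_eq ?_)⟩
    exact congrArg Subtype.val (iso.apply_symm_apply ⟨(c : X), hcT⟩).symm

lemma exists_cofinal_regular {X : Type u} [LinearOrder X] {S : Set X} (hne : S.Nonempty)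
    (hnomax : ¬ ∃ m ∈ S, ∀ a ∈ S, a ≤ m) :
    ∃ ν : Cardinal.{u}, ν.IsRegular ∧ ∃ g : ν.ord.ToType → X, StrictMono g ∧
      (∀ γ, g γ ∈ S) ∧ ∀ a ∈ S, ∃ γ, a ≤ g γ := by
  have hex : {o : Ordinal.{u} | CofSeq S o}.Nonempty := cofSeq_exists S
  set o₀ := sInf {o : Ordinal.{u} | CofSeq S o} with ho₀def
  have ho₀ : CofSeq S o₀ := csInf_mem hex
  obtain ⟨g, hg, hgS, hgcof⟩ := ho₀
  haveI iwo : IsWellOrder o₀.ToType (· < ·) := isWellOrder_lt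
  obtain ⟨U, hU, htypeU⟩ : ∃ U : Set o₀.ToType, (∀ a, ∃ b ∈ U, ¬ b < a) ∧
      Ordinal.type ((· < ·) : U → U → Prop) =
        (Ordinal.cof (Ordinal.type ((· < ·) : o₀.ToType → o₀.ToType → Prop))).ord := by
    obtain ⟨s, hs, h⟩ := Ordinal.exists_ord_cof_eq o₀.ToType
    refine ⟨s, fun a => ?_, ?_⟩
    · obtain ⟨b, hb, hab⟩ := hs a
      exact ⟨b, hb, not_lt.mpr hab⟩
    · rw [Ordinal.type_toType, ← Ordinal.cof_toType]
      exact h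
  rw [Ordinal.type_toType] at htypeU
  set ν := Ordinal.cof o₀ with hνdef
  haveI : IsWellOrder ν.ord.ToType (· < ·) := isWellOrder_lt
  have htype2 : Ordinal.type ((· < ·) : ν.ord.ToType → ν.ord.ToType → Prop)
      = Ordinal.type ((· < ·) : U → U → Prop) := by
    rw [Ordinal.type_toType, htypeU]
  obtain ⟨iso⟩ := Ordinal.type_eq.mp htype2
  have hcof2 : CofSeq S ν.ord := by
    refine ⟨fun γ => g ((iso γ : ↥U) : o₀.ToType), ?_, fun γ => hgS _, ?_⟩
    · intro γ γ' h
      exact hg (iso.map_rel_iff.mpr h)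
    · intro a ha
      obtain ⟨γ, hγ⟩ := hgcof a ha
      obtain ⟨u, huU, hu⟩ := hU γ
      have h3 : iso (iso.symm ⟨u, huU⟩) = ⟨u, huU⟩ := iso.apply_symm_apply _
      exact ⟨iso.symm ⟨u, huU⟩, hγ.trans (hg.monotone
        ((not_lt.mp hu).trans_eq (congrArg Subtype.val h3).symm))⟩
  have h1 : o₀ ≤ ν.ord := csInf_le' hcof2
  have h2 : ν.ord ≤ o₀ :=
    le_trans (Cardinal.ord_le_ord.mpr (Ordinal.cof_le_card o₀)) (Cardinal.ord_card_le o₀)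
  have heq : ν.ord = o₀ := le_antisymm h2 h1
  have hnomax' : ∀ m : o₀.ToType, ∃ γ, m < γ := by
    intro m
    by_contra hcon
    push_neg at hcon
    exact hnomax ⟨g m, hgS m, fun a ha =>
      (hgcof a ha).elim fun γ hγ => hγ.trans (hg.monotone (hcon γ))⟩
  have hlim : Order.IsSuccLimit o₀ := by
    rw [Ordinal.isSuccLimit_iff, Order.isSuccPrelimit_iff_succ_lt]
    constructor
    · intro h0
      obtain ⟨a, ha⟩ := hne
      obtain ⟨γ, -⟩ := hgcof a ha
      exact (Ordinal.toType_empty_iff_eq_zero.mpr h0).false γ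
    · intro a halt
      set m := Ordinal.enum ((· < ·) : o₀.ToType → o₀.ToType → Prop)
        ⟨a, by rw [Set.mem_Iio, Ordinal.type_toType]; exact halt⟩ with hmdef
      obtain ⟨m', hm'⟩ := hnomax' m
      have e1 : Order.succ a = Order.succ (Ordinal.typein ((· < ·) : o₀.ToType → o₀.ToType → Prop) m) := by
        rw [hmdef]; exact congrArg Order.succ (Ordinal.typein_enum _ _).symm
      rw [e1]
      calc Order.succ (Ordinal.typein ((· < ·) : o₀.ToType → o₀.ToType → Prop) m)
          ≤ Ordinal.typein ((· < ·) : o₀.ToType → o₀.ToType → Prop) m' :=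
            Order.succ_le_of_lt ((Ordinal.typein_lt_typein _).mpr hm')
        _ < o₀ := by
            conv_rhs => rw [← Ordinal.type_toType o₀]
            exact Ordinal.typein_lt_type _ m'
  have hreg : ν.IsRegular := ⟨Ordinal.aleph0_le_cof.mpr hlim, by rw [heq]⟩
  obtain ⟨g2, hg2, hg2S, hg2cof⟩ := hcof2
  exact ⟨ν, hreg, g2, hg2, hg2S, hg2cof⟩

lemma inc_main {I : Type v} (D : Ultrafilter I) {X : Type u} [LinearOrder X]
    [TopologicalSpace X] [T2Space X]
    (hGO : ∃ 𝓑 : Set (Set X), IsTopologicalBasis 𝓑 ∧ ∀ s ∈ 𝓑, s.OrdConnected)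
    (x : I → X)
    (hmono : ∀ ν : Cardinal.{u}, ℵ₀ ≤ ν → ν.IsRegular → Decomposable D ν →
      ∀ f : ν.ord.ToType → X, StrictMono f →
        ∃ s : X, IsLUB (Set.range f) s ∧ Tendsto f atTop (𝓝 s))
    (hne : {a : X | {i | a ≤ x i} ∈ D}.Nonempty)
    (hnomax : ¬ ∃ m ∈ {a : X | {i | a ≤ x i} ∈ D}, ∀ a ∈ {a : X | {i | a ≤ x i} ∈ D}, a ≤ m)
    (hxS : {i | x i ∈ {a : X | {i | a ≤ x i} ∈ D}} ∈ D) :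
    ∃ p : X, DConv D x p := by
  classical
  set S := {a : X | {i | a ≤ x i} ∈ D} with hSdef
  obtain ⟨ν, hreg, g, hg, hgS, hgcof⟩ := exists_cofinal_regular hne hnomax
  have hν : ℵ₀ ≤ ν := hreg.aleph0_le
  have hν0 : ν ≠ 0 := (Cardinal.aleph0_pos.trans_le hν).ne'
  haveI : Nonempty ν.ord.ToType := Ordinal.toType_nonempty_iff_ne_zero.mpr (by simpa using hν0)
  haveI : NoMaxOrder ν.ord.ToType := Cardinal.noMaxOrder hν
  have hgcof' : ∀ a ∈ S, ∃ γ, a < g γ := by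
    intro a ha
    obtain ⟨γ, hγ⟩ := hgcof a ha
    obtain ⟨γ', hγ'⟩ := exists_gt γ
    exact ⟨γ', hγ.trans_lt (hg hγ')⟩
  have hdec : Decomposable D ν := by
    refine ⟨fun i => if hex : ∃ γ, x i < g γ then hex.choose else Classical.arbitrary _, ?_⟩
    intro S' hS'
    obtain ⟨γ₀, hγ₀⟩ := bddAbove_of_small hreg hS'
    have hsub : (fun i => if hex : ∃ γ, x i < g γ then hex.choose else Classical.arbitrary _) ⁻¹' S'
        ⊆ {i | x i < g γ₀} ∪ {i | x i ∉ S} := by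
      intro i hi
      by_cases hex : ∃ γ, x i < g γ
      · left
        simp only [Set.mem_preimage, dif_pos hex] at hi
        exact hex.choose_spec.trans_le (hg.monotone (hγ₀ hi))
      · right
        intro hxiS
        exact hex (hgcof' _ hxiS)
    intro hmem
    have hun : {i | x i < g γ₀} ∪ {i | x i ∉ S} ∈ D := Filter.mem_of_superset hmem hsub
    rcases (Ultrafilter.union_mem_iff.mp hun) with h | h
    · have hS0 : {i | g γ₀ ≤ x i} ∈ D := hgS γ₀
      have hcompl : {i | x i < g γ₀} = {i | g γ₀ ≤ x i}ᶜ := by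
        ext i; simp [not_le]
      rw [hcompl] at h
      exact (Ultrafilter.compl_mem_iff_notMem.mp h) hS0
    · exact (Ultrafilter.compl_mem_iff_notMem.mp h) hxS
  obtain ⟨s, hslub, hstend⟩ := hmono ν hν hreg hdec g hg
  have hsS : s ∉ S := by
    intro hsS
    obtain ⟨γ, hγ⟩ := hgcof' s hsS
    exact absurd (hslub.1 (Set.mem_range_self γ)) (not_le.mpr hγ)
  have hq : {i | x i < s} ∈ D := by
    have h1 : {i | s ≤ x i}ᶜ ∈ D := Ultrafilter.compl_mem_iff_notMem.mpr hsS
    have : {i | s ≤ x i}ᶜ = {i | x i < s} := by ext i; simp [not_le]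
    rwa [this] at h1
  obtain ⟨𝓑, hB, hconv⟩ := hGO
  refine ⟨s, fun U hU hsU => ?_⟩
  obtain ⟨V, hVB, hsV, hVU⟩ := hB.exists_subset_of_mem_open hsU hU
  have hev : ∀ᶠ γ in atTop, g γ ∈ V := hstend.eventually_mem ((hB.isOpen hVB).mem_nhds hsV)
  rw [eventually_atTop] at hev
  obtain ⟨γ₀, hγ₀⟩ := hev
  have hsub2 : {i | g γ₀ ≤ x i} ∩ {i | x i < s} ⊆ {i | x i ∈ U} := by
    rintro i ⟨h1, h2⟩
    exact hVU ((hconv V hVB).out (hγ₀ γ₀ le_rfl) hsV ⟨h1, h2.le⟩)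
  exact Filter.mem_of_superset (Filter.inter_mem (hgS γ₀) hq) hsub2

lemma hGO_dual {X : Type u} [LinearOrder X] [TopologicalSpace X]
    (hGO : ∃ 𝓑 : Set (Set X), IsTopologicalBasis 𝓑 ∧ ∀ s ∈ 𝓑, s.OrdConnected) :
    ∃ 𝓑 : Set (Set Xᵒᵈ), IsTopologicalBasis 𝓑 ∧ ∀ s ∈ 𝓑, s.OrdConnected := by
  obtain ⟨B, h1, h2⟩ := hGO
  exact ⟨B, h1, fun s hs => (h2 s hs).dual⟩

lemma bwd {I : Type v} (D : Ultrafilter I) {X : Type u} [LinearOrder X]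
    [TopologicalSpace X] [T2Space X]
    (hGO : ∃ 𝓑 : Set (Set X), IsTopologicalBasis 𝓑 ∧ ∀ s ∈ 𝓑, s.OrdConnected)
    (hmono : ∀ ν : Cardinal.{u}, ℵ₀ ≤ ν → ν.IsRegular → Decomposable D ν →
      ∀ f : ν.ord.ToType → X, StrictMono f →
        ∃ s : X, IsLUB (Set.range f) s ∧ Tendsto f atTop (𝓝 s))
    (hmonod : ∀ ν : Cardinal.{u}, ℵ₀ ≤ ν → ν.IsRegular → Decomposable D ν →
      ∀ f : ν.ord.ToType → Xᵒᵈ, StrictMono f →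
        ∃ s : Xᵒᵈ, IsLUB (Set.range f) s ∧ Tendsto f atTop (𝓝 s)) :
    DCompact D X := by
  intro x
  classical
  set S := {a : X | {i | a ≤ x i} ∈ D} with hSdef
  set S' := {a : X | {i | x i ≤ a} ∈ D} with hS'def
  have fS : ∀ a, a ∉ S → {i | x i < a} ∈ D := by
    intro a ha
    have h1 : {i | a ≤ x i}ᶜ ∈ D := Ultrafilter.compl_mem_iff_notMem.mpr ha
    have h2 : {i | a ≤ x i}ᶜ = {i | x i < a} := by ext i; simp [not_le]
    rwa [h2] at h1
  have fS' : ∀ a, a ∉ S' → {i | a < x i} ∈ D := by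
    intro a ha
    have h1 : {i | x i ≤ a}ᶜ ∈ D := Ultrafilter.compl_mem_iff_notMem.mpr ha
    have h2 : {i | x i ≤ a}ᶜ = {i | a < x i} := by ext i; simp [not_le]
    rwa [h2] at h1
  by_cases hxS : {i | x i ∈ S} ∈ D
  · by_cases hSmax : ∃ m ∈ S, ∀ a ∈ S, a ≤ m
    · obtain ⟨p, hpS, hpmax⟩ := hSmax
      have key : {i | x i = p} ∈ D := by
        have h1 : {i | p ≤ x i} ∩ {i | x i ∈ S} ⊆ {i | x i = p} := by
          rintro i ⟨h1, h2⟩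
          exact le_antisymm (hpmax _ h2) h1
        exact Filter.mem_of_superset (Filter.inter_mem hpS hxS) h1
      refine ⟨p, fun U hU hpU => Filter.mem_of_superset key fun i hi => ?_⟩
      rw [Set.mem_setOf] at hi ⊢
      rw [hi]; exact hpU
    · have hne : S.Nonempty := by
        rcases Set.eq_empty_or_nonempty S with h | h
        · rw [h] at hxS
          simp only [Set.mem_empty_iff_false, Set.setOf_false] at hxS
          exact absurd hxS (Filter.empty_notMem (D : Filter I))
        · exact h
      exact inc_main D hGO x hmono hne hSmax hxS
  · have hxSc : {i | x i ∈ Sᶜ} ∈ D := by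
      have := Ultrafilter.compl_mem_iff_notMem.mpr hxS
      have h2 : {i | x i ∈ S}ᶜ = {i | x i ∈ Sᶜ} := rfl
      rwa [h2] at this
    have hScS' : Sᶜ ⊆ S' := fun a ha =>
      Filter.mem_of_superset (fS a ha) fun i hi => le_of_lt hi
    have hxS' : {i | x i ∈ S'} ∈ D :=
      Filter.mem_of_superset hxSc fun i hi => hScS' hi
    have hS'ne : S'.Nonempty := by
      rcases Set.eq_empty_or_nonempty Sᶜ with h | h
      · rw [h] at hxSc
        simp only [Set.mem_empty_iff_false, Set.setOf_false] at hxSc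
        exact absurd hxSc (Filter.empty_notMem (D : Filter I))
      · exact h.mono hScS'
    by_cases hS'min : ∃ m ∈ S', ∀ a ∈ S', m ≤ a
    · obtain ⟨m, hmS', hmmin⟩ := hS'min
      have key : {i | x i = m} ∈ D := by
        have h1 : {i | x i ≤ m} ∩ {i | x i ∈ Sᶜ} ⊆ {i | x i = m} := by
          rintro i ⟨h1, h2⟩
          by_contra hne'
          have hlt : x i < m := lt_of_le_of_ne h1 hne'
          have hxi1 : x i ∉ S' := fun hmem => absurd (hmmin _ hmem) (not_le.mpr hlt)
          obtain ⟨j, hj1, hj2⟩ := Ultrafilter.nonempty_of_mem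
            (Filter.inter_mem (fS' _ hxi1) (fS _ h2))
          exact absurd (Set.mem_setOf.mp hj1) (not_lt.mpr (le_of_lt (Set.mem_setOf.mp hj2)))
        exact Filter.mem_of_superset (Filter.inter_mem hmS' hxSc) h1
      refine ⟨m, fun U hU hmU => Filter.mem_of_superset key fun i hi => ?_⟩
      rw [Set.mem_setOf] at hi ⊢
      rw [hi]; exact hmU
    · haveI : T2Space Xᵒᵈ := ‹T2Space X›
      have hres := inc_main (X := Xᵒᵈ) D (hGO_dual hGO) x hmonod hS'ne hS'min hxS'
      exact hres

/-- A GO space is `D`-compact iff, for every infinite regular `ν` such that `D` is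
`ν`-decomposable, every strictly increasing `ν`-indexed sequence has a supremum to
which it converges and every strictly decreasing `ν`-indexed sequence has an infimum
to which it converges. -/
theorem stmt9 {I : Type v} (D : Ultrafilter I)
    (X : Type u) [LinearOrder X] [TopologicalSpace X] [T2Space X]
    (hGO : ∃ 𝓑 : Set (Set X), IsTopologicalBasis 𝓑 ∧ ∀ s ∈ 𝓑, s.OrdConnected) :
    DCompact D X ↔
      ∀ ν : Cardinal.{u}, ℵ₀ ≤ ν → ν.IsRegular → Decomposable D ν →
        (∀ f : ν.ord.ToType → X, StrictMono f →
          ∃ s : X, IsLUB (Set.range f) s ∧ Tendsto f atTop (𝓝 s)) ∧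
        (∀ f : ν.ord.ToType → X, StrictAnti f →
          ∃ s : X, IsGLB (Set.range f) s ∧ Tendsto f atTop (𝓝 s)) := by
  constructor
  · intro hc ν hν hreg hdec
    constructor
    · exact fun f hf => fwd_mono D hGO hc hν hdec f hf
    · intro f hf
      haveI : T2Space Xᵒᵈ := ‹T2Space X›
      obtain ⟨s, hlub, htend⟩ := fwd_mono (X := Xᵒᵈ) D (hGO_dual hGO) hc hν hdec
        (fun γ => OrderDual.toDual (f γ)) (fun a b h => hf h)
      exact ⟨OrderDual.ofDual s, hlub.dual, htend⟩
  · intro hyp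
    apply bwd D hGO
    · exact fun ν hν hreg hdec f hf => (hyp ν hν hreg hdec).1 f hf
    · intro ν hν hreg hdec f hf
      obtain ⟨s, hglb, htend⟩ := (hyp ν hν hreg hdec).2
        (fun γ => OrderDual.ofDual (f γ)) (fun a b h => hf h)
      exact ⟨OrderDual.toDual s, hglb.dual, htend⟩
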